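/- Let J be an ideal on [0,1]∩ℚ such that for some countable family {X_n : n ∈ ℕ} of infinite subsets of [0,1]∩ℚ, every A ∉ J is split by some X_n (both A ∩ X_n and A \ X_n infinite). Then conv ≤_K J, and conversely if conv ≤_K J such a countable splitting family exists. -/

import Mathlib

open Filter Topology Set

/-- The upper-density submeasure `φ(A) = sup_n |A ∩ [0,n]| / (n+1)`. -/
noncomputable def phi (A : Set ℕ) : ℝ :=
  ⨆ n : ℕ, ((A ∩ Set.Iic n).ncard : ℝ) / (n + 1)

/-- The ideal of asymptotic density zero sets. -/
def densityZero : Set (Set ℕ) :=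
  {A | Tendsto (fun n : ℕ => ((A ∩ Set.Iic n).ncard : ℝ) / (n + 1)) atTop (𝓝 0)}

/-- `I` is an ideal on `X` (containing all finite sets, proper). -/
def IsIdeal {X : Type*} (I : Set (Set X)) : Prop :=
  (∀ A ∈ I, ∀ B, B ⊆ A → B ∈ I) ∧ (∀ A ∈ I, ∀ B ∈ I, A ∪ B ∈ I) ∧
    (∀ A : Set X, A.Finite → A ∈ I) ∧ Set.univ ∉ I

/-- `J` is a P⁺-ideal. -/
def IsPPlus {X : Type*} (J : Set (Set X)) : Prop :=
  ∀ A : ℕ → Set X, (∀ n, A (n + 1) ⊆ A n) → (∀ n, A n ∉ J) →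
    ∃ B ∉ J, ∀ n, (B \ A n).Finite

/-- Katětov order. -/
def KatLE {X Y : Type*} (I : Set (Set X)) (J : Set (Set Y)) : Prop :=
  ∃ f : Y → X, ∀ A ∈ I, f ⁻¹' A ∈ J

/-- membership in the class `S` of strictly decreasing null sequences in `(0,1/2]`. -/
def memS (α : ℕ → ℝ) : Prop :=
  (∀ n, 0 < α n) ∧ (∀ n, α n ≤ 1 / 2) ∧ StrictAnti α ∧ Tendsto α atTop (𝓝 0)

/-- The underlying countable set `[0,1] ∩ ℚ`. -/
abbrev Q01 : Type := ↥(Set.Icc (0 : ℚ) 1)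

/-- The real number corresponding to a point of `[0,1] ∩ ℚ`. -/
noncomputable def qr (q : Q01) : ℝ := ((q : ℚ) : ℝ)

/-- The set `S ⊆ [0,1]∩ℚ` converges to `x ∈ ℝ`. -/
def ConvTo (S : Set Q01) (x : ℝ) : Prop :=
  ∀ ε > (0 : ℝ), {q ∈ S | ε ≤ |qr q - x|}.Finite

/-- `S` converges `I`-quickly with respect to `α` to the point `x`. -/
def IQuickTo (I : Set (Set ℕ)) (α : ℕ → ℝ) (S : Set Q01) (x : ℝ) : Prop :=
  ConvTo S x ∧
    {n : ℕ | ∃ q ∈ S, α (n + 1) ≤ |qr q - x| ∧ |qr q - x| < α n} ∈ I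

/-- `S` converges `I`-quickly with respect to `α`. -/
def IQuick (I : Set (Set ℕ)) (α : ℕ → ℝ) (S : Set Q01) : Prop :=
  ∃ x ∈ Set.Icc (0 : ℝ) 1, IQuickTo I α S x

/-- The ideal `conv(I,(α_n))` on `[0,1] ∩ ℚ`. -/
def convQI (I : Set (Set ℕ)) (α : ℕ → ℝ) : Set (Set Q01) :=
  {A | ∃ F : Finset (Set Q01), (∀ S ∈ F, IQuick I α S) ∧ A ⊆ ⋃₀ ↑F}

/-- The ideal `conv` on `[0,1] ∩ ℚ` generated by convergent sequences. -/
def convIdeal : Set (Set Q01) :=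
  {A | ∃ F : Finset (Set Q01),
    (∀ S ∈ F, ∃ x ∈ Set.Icc (0 : ℝ) 1, ConvTo S x) ∧ A ⊆ ⋃₀ ↑F}

/-- Identify a point of Cantor space `2^X` with a subset of `X`. -/
def toSet {X : Type*} (f : X → Bool) : Set X := {x | f x = true}

/-- `Σ⁰ₙ` sets of a topological space: `IsSigma0 1 = open`,
`IsSigma0 (n+1)` = countable unions of complements of `Σ⁰ₙ` sets. -/
def IsSigma0 {X : Type*} [TopologicalSpace X] : ℕ → Set X → Prop
  | 0, _ => False
  | 1, S => IsOpen S
  | (n + 2), S => ∃ f : ℕ → Set X, (∀ k, IsSigma0 (n + 1) (f k)ᶜ) ∧ S = ⋃ k, f k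


instance : Infinite Q01 := by
  apply Infinite.of_injective (fun n : ℕ => (⟨1 / (n + 1), by
    constructor
    · positivity
    · rw [div_le_one (by positivity)]; exact_mod_cast Nat.le_add_left 1 n⟩ : Q01))
  intro a b hab
  have h : (1 : ℚ) / (a + 1) = 1 / (b + 1) := congrArg Subtype.val hab
  field_simp at h
  exact_mod_cast (add_right_cancel h.symm)

lemma qr_mem_Icc (q : Q01) : qr q ∈ Set.Icc (0:ℝ) 1 := by
  obtain ⟨q, hq0, hq1⟩ := q
  unfold qr
  constructor
  · exact_mod_cast hq0
  · exact_mod_cast hq1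

lemma qr_injective : Function.Injective qr := by
  intro a b hab
  unfold qr at hab
  have : (a : ℚ) = b := by exact_mod_cast hab
  exact Subtype.ext this

/-- infinitely many rationals in a real interval -/
lemma infinite_rat_Ioo {a b : ℝ} (hab : a < b) :
    {q : ℚ | a < (q:ℝ) ∧ (q:ℝ) < b}.Infinite := by
  by_contra hfin
  rw [Set.not_infinite] at hfin
  obtain ⟨q0, hq0a, hq0b⟩ := exists_rat_btwn hab
  have hne : hfin.toFinset.Nonempty := ⟨q0, by simp [hq0a, hq0b]⟩
  set m := hfin.toFinset.min' hne with hm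
  have hmmem : m ∈ {q : ℚ | a < (q:ℝ) ∧ (q:ℝ) < b} := by
    have := hfin.toFinset.min'_mem hne; simpa using this
  obtain ⟨q1, hq1a, hq1b⟩ := exists_rat_btwn hmmem.1
  have hq1m : q1 < m := by exact_mod_cast hq1b
  have : q1 ∈ hfin.toFinset := by
    simp only [Set.Finite.mem_toFinset, Set.mem_setOf_eq]
    exact ⟨hq1a, lt_trans (by exact_mod_cast hq1b) hmmem.2⟩
  exact absurd (hfin.toFinset.min'_le q1 this) (not_le.mpr hq1m)

lemma exists_q01_near (x : ℝ) (hx : x ∈ Set.Icc (0:ℝ) 1) {δ : ℝ} (hδ : 0 < δ)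
    (F : Finset Q01) : ∃ q : Q01, q ∉ F ∧ |qr q - x| < δ := by
  set δ' := min δ (1/2) with hδ'
  have hδ'pos : 0 < δ' := lt_min hδ (by norm_num)
  have hδ'le : δ' ≤ δ := min_le_left _ _
  have hδ'half : δ' ≤ 1/2 := min_le_right _ _
  -- choose interval (a, a+δ') ⊆ [0,1] within δ of x
  obtain ⟨a, ha0, ha1, hax⟩ : ∃ a : ℝ, 0 ≤ a ∧ a + δ' ≤ 1 ∧ ∀ y, a < y → y < a + δ' → |y - x| < δ := by
    rcases le_or_gt x (1/2) with h | h
    · refine ⟨x, hx.1, by linarith, ?_⟩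
      intro y h1 h2
      rw [abs_lt]; constructor <;> [linarith; linarith [hδ'le]]
    · refine ⟨x - δ', by linarith, by linarith [hx.2], ?_⟩
      intro y h1 h2
      rw [abs_lt]; constructor <;> [linarith [hδ'le]; linarith [hδ'le]]
  have hinf := infinite_rat_Ioo (show a < a + δ' by linarith)
  -- map to Q01
  have hsub : ∀ q ∈ {q : ℚ | a < (q:ℝ) ∧ (q:ℝ) < a + δ'}, q ∈ Set.Icc (0:ℚ) 1 := by
    intro q hq
    constructor
    · exact_mod_cast le_of_lt (lt_of_le_of_lt ha0 hq.1)
    · exact_mod_cast le_of_lt (lt_of_lt_of_le hq.2 ha1)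
  set T : Set Q01 := {q : Q01 | a < qr q ∧ qr q < a + δ'} with hT
  have hTinf : T.Infinite := by
    have : Set.InjOn (fun q : Q01 => (q : ℚ)) T := fun p _ q _ h => Subtype.ext h
    intro hfin
    apply hinf
    have : ((fun q : Q01 => (q : ℚ)) '' T).Finite := hfin.image _
    apply Set.Finite.subset this
    intro q hq
    exact ⟨⟨q, hsub q hq⟩, hq, rfl⟩
  obtain ⟨q, hqT, hqF⟩ := hTinf.exists_notMem_finset F
  exact ⟨q, hqF, hax _ hqT.1 hqT.2⟩
def AccOf (B : Set Q01) (x : ℝ) : Prop := ∀ ε > (0:ℝ), {q ∈ B | |qr q - x| < ε}.Infinite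

lemma exists_acc {B : Set Q01} (hB : B.Infinite) :
    ∃ x ∈ Set.Icc (0:ℝ) 1, AccOf B x := by
  obtain ⟨u⟩ : Nonempty (ℕ ↪ ↥B) := ⟨hB.natEmbedding⟩
  set v : ℕ → ℝ := fun k => qr (u k : ↥B) with hv
  have hvmem : ∀ k, v k ∈ Set.Icc (0:ℝ) 1 := fun k => qr_mem_Icc _
  obtain ⟨x, hx, φ, hφ, hconv⟩ := (isCompact_Icc (a := (0:ℝ)) (b := 1)).tendsto_subseq hvmem
  refine ⟨x, hx, ?_⟩
  intro ε hε
  obtain ⟨K, hK⟩ := Metric.tendsto_atTop.mp hconv ε hε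
  refine infinite_of_injective_forall_mem (f := fun k : ℕ => ((u (φ (k + K))) : Q01)) ?_ ?_
  · intro a b hab
    have : u (φ (a + K)) = u (φ (b + K)) := Subtype.ext hab
    have := u.injective this
    have := hφ.injective this
    omega
  · intro k
    refine ⟨(u (φ (k + K))).2, ?_⟩
    have := hK (k + K) (Nat.le_add_left K k)
    rw [Real.dist_eq] at this
    exact this

lemma qr_cast (q : Q01) : qr q = ((q:ℚ):ℝ) := rfl

lemma convIdeal_of_finite {A : Set Q01} (h : A.Finite) : A ∈ convIdeal := by
  classical
  refine ⟨h.toFinset.image (fun q => ({q} : Set Q01)), ?_, ?_⟩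
  · intro S hS
    simp only [Finset.mem_image] at hS
    obtain ⟨q, _, rfl⟩ := hS
    refine ⟨qr q, qr_mem_Icc q, ?_⟩
    intro ε hε
    apply Set.Finite.subset (Set.finite_singleton q)
    exact fun p hp => hp.1
  · intro q hq
    refine ⟨{q}, ?_, rfl⟩
    simp only [Finset.coe_image, Set.mem_image, Finset.mem_coe]
    exact ⟨q, by simp [h.mem_toFinset.mpr hq], rfl⟩

lemma two_acc_of_not_convIdeal {B : Set Q01} (hB : B ∉ convIdeal) :
    ∃ x y : ℝ, x ≠ y ∧ AccOf B x ∧ AccOf B y := by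
  have hBinf : B.Infinite := by
    intro hfin; exact hB (convIdeal_of_finite hfin)
  obtain ⟨x, hxI, hxA⟩ := exists_acc hBinf
  have : ∃ ε > (0:ℝ), {q ∈ B | ε ≤ |qr q - x|}.Infinite := by
    by_contra h
    push_neg at h
    apply hB
    refine ⟨{B}, ?_, by simp⟩
    intro S hS
    rw [Finset.mem_singleton] at hS; subst hS
    refine ⟨x, hxI, ?_⟩
    intro ε hε
    rcases h ε hε with h'
    exact h'
  obtain ⟨ε₀, hε₀, hBinf'⟩ := this
  obtain ⟨y, _, hyA⟩ := exists_acc hBinf'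
  refine ⟨x, y, ?_, hxA, ?_⟩
  · intro rfl'
    have := hyA ε₀ hε₀
    apply this.nonempty.elim
    rintro q ⟨⟨_, h1⟩, h2⟩
    rw [← rfl'] at h2
    linarith
  · intro ε hε
    apply (hyA ε hε).mono
    rintro q ⟨⟨hq, _⟩, h2⟩
    exact ⟨hq, h2⟩
open scoped Classical in
noncomputable def ddX (X : ℕ → Set Q01) (q : Q01) (n : ℕ) : ℝ :=
  (if q ∈ X n then 2 else 0) / 3 ^ (n + 1)

noncomputable def rX (X : ℕ → Set Q01) (q : Q01) : ℝ := ∑' n, ddX X q n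

lemma geom_summable : Summable (fun n : ℕ => (2:ℝ) / 3 ^ (n + 1)) := by
  have h : (fun n : ℕ => (2:ℝ) / 3 ^ (n + 1)) = fun n : ℕ => (2/3) * (1/3) ^ n := by
    funext n
    rw [pow_succ]
    field_simp
    rw [← mul_pow]; norm_num
  rw [h]
  exact (summable_geometric_of_lt_one (by norm_num) (by norm_num)).mul_left _

lemma geom_tsum : ∑' n : ℕ, (2:ℝ) / 3 ^ (n + 1) = 1 := by
  have h : (fun n : ℕ => (2:ℝ) / 3 ^ (n + 1)) = fun n : ℕ => (2/3) * (1/3) ^ n := by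
    funext n; rw [pow_succ]; field_simp; rw [← mul_pow]; norm_num
  rw [h, tsum_mul_left, tsum_geometric_of_lt_one (by norm_num) (by norm_num)]
  norm_num

lemma ddX_nonneg (X : ℕ → Set Q01) (q : Q01) (n : ℕ) : 0 ≤ ddX X q n := by
  unfold ddX; positivity

lemma ddX_le (X : ℕ → Set Q01) (q : Q01) (n : ℕ) : ddX X q n ≤ 2 / 3 ^ (n + 1) := by
  classical
  by_cases h : q ∈ X n
  · rw [ddX, if_pos h]
  · rw [ddX, if_neg h, zero_div]; positivity

lemma ddX_summable (X : ℕ → Set Q01) (q : Q01) : Summable (ddX X q) :=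
  Summable.of_nonneg_of_le (ddX_nonneg X q) (ddX_le X q) geom_summable

lemma rX_mem_Icc (X : ℕ → Set Q01) (q : Q01) : rX X q ∈ Set.Icc (0:ℝ) 1 := by
  constructor
  · exact tsum_nonneg (ddX_nonneg X q)
  · rw [show (1:ℝ) = ∑' n : ℕ, (2:ℝ) / 3 ^ (n + 1) from geom_tsum.symm]
    exact Summable.tsum_le_tsum (ddX_le X q) (ddX_summable X q) geom_summable

/-- separation: if p, q differ on X n, their Cantor values are ≥ 3^{-(n+1)} apart. -/
lemma rX_sep {X : ℕ → Set Q01} {p q : Q01} {n : ℕ}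
    (hp : p ∈ X n) (hq : q ∉ X n) : 1 / 3 ^ (n + 1) ≤ |rX X p - rX X q| := by
  classical
  set c : ℕ → ℝ := fun k => ddX X p k - ddX X q k with hc
  have hcs : Summable c := (ddX_summable X p).sub (ddX_summable X q)
  have hex : ∃ k, ¬ ((p ∈ X k) ↔ (q ∈ X k)) := ⟨n, by tauto⟩
  set m := Nat.find hex with hm
  have hmn : m ≤ n := Nat.find_le (by tauto)
  have hmdiff : ¬ ((p ∈ X m) ↔ (q ∈ X m)) := Nat.find_spec hex
  have hbelow : ∀ k < m, c k = 0 := by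
    intro k hk
    have : (p ∈ X k) ↔ (q ∈ X k) := by
      by_contra h; exact absurd (Nat.find_le h) (not_le.mpr hk)
    simp only [hc, ddX]
    by_cases hpk : p ∈ X k
    · rw [if_pos hpk, if_pos (this.mp hpk)]; ring
    · rw [if_neg hpk, if_neg (fun h => hpk (this.mpr h))]; ring
  have hcm : |c m| = 2 / 3 ^ (m + 1) := by
    simp only [hc, ddX]
    by_cases hpm : p ∈ X m
    · rw [if_pos hpm, if_neg (fun h => hmdiff ⟨fun _ => h, fun _ => hpm⟩)]
      rw [show (2:ℝ)/3^(m+1) - 0/3^(m+1) = 2/3^(m+1) by ring]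
      rw [abs_of_nonneg (by positivity)]
    · rw [if_neg hpm, if_pos (by by_contra h; exact hmdiff ⟨fun hh => absurd hh hpm, fun hh => absurd hh h⟩)]
      rw [show (0:ℝ)/3^(m+1) - 2/3^(m+1) = -(2/3^(m+1)) by ring, abs_neg]
      rw [abs_of_nonneg (by positivity)]
  have hsplit := Summable.sum_add_tsum_nat_add (m + 1) hcs
  have hsum : ∑ i ∈ Finset.range (m + 1), c i = c m := by
    rw [Finset.sum_range_succ]
    rw [Finset.sum_eq_zero (fun i hi => hbelow i (Finset.mem_range.mp hi))]
    ring
  -- tail bound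
  have htail : |∑' i : ℕ, c (i + (m + 1))| ≤ 1 / 3 ^ (m + 1) := by
    have habs : ∀ i : ℕ, |c (i + (m + 1))| ≤ (2:ℝ) / 3 ^ (i + (m + 1) + 1) := by
      intro i
      simp only [hc, ddX]
      have h1 : |(if p ∈ X (i + (m+1)) then (2:ℝ) else 0) / 3 ^ (i + (m+1) + 1)
          - (if q ∈ X (i + (m+1)) then (2:ℝ) else 0) / 3 ^ (i + (m+1) + 1)| ≤ 2 / 3 ^ (i + (m+1) + 1) := by
        by_cases h2 : p ∈ X (i + (m+1)) <;> by_cases h3 : q ∈ X (i + (m+1)) <;>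
          simp [h2, h3] <;> first
          | positivity
          | rw [abs_of_nonneg (by positivity)]
      exact h1
    have hs1 : Summable (fun i : ℕ => |c (i + (m + 1))|) := (hcs.comp_injective (add_left_injective (m+1))).abs
    have hs2 : Summable (fun i : ℕ => (2:ℝ) / 3 ^ (i + (m + 1) + 1)) := by
      have := geom_summable.comp_injective (add_left_injective (m+1))
      exact this
    calc |∑' i : ℕ, c (i + (m + 1))| ≤ ∑' i : ℕ, |c (i + (m + 1))| := by
          simpa [Real.norm_eq_abs] using norm_tsum_le_tsum_norm (f := fun i => c (i + (m+1)))
            (by simpa [Real.norm_eq_abs] using (hcs.comp_injective (add_left_injective (m+1))).abs)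
      _ ≤ ∑' i : ℕ, (2:ℝ) / 3 ^ (i + (m + 1) + 1) := Summable.tsum_le_tsum habs hs1 hs2
      _ = 1 / 3 ^ (m + 1) := by
          have : (fun i : ℕ => (2:ℝ) / 3 ^ (i + (m + 1) + 1)) =
              fun i : ℕ => (2 / 3 ^ (m + 2)) * (1/3) ^ i := by
            funext i
            rw [show i + (m+1) + 1 = (m + 2) + i by omega, pow_add]
            field_simp
            rw [← mul_pow]; norm_num
          rw [this, tsum_mul_left, tsum_geometric_of_lt_one (by norm_num) (by norm_num)]
          have h32 : (3:ℝ)^(m+2) = 3^(m+1) * 3 := by ring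
          rw [h32]
          have h33 : (0:ℝ) < 3^(m+1) := by positivity
          field_simp
          ring
  have hdiff : rX X p - rX X q = ∑' k, c k := (Summable.tsum_sub (ddX_summable X p) (ddX_summable X q)).symm
  rw [hdiff, ← hsplit, hsum]
  have h1 : 2 / 3 ^ (m+1) - 1 / 3 ^ (m+1) ≤ |c m + ∑' i : ℕ, c (i + (m + 1))| := by
    calc 2 / 3 ^ (m+1) - 1 / 3 ^ (m+1) ≤ |c m| - |∑' i : ℕ, c (i + (m + 1))| := by
          rw [hcm]; linarith
      _ ≤ |c m + ∑' i : ℕ, c (i + (m + 1))| := by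
          have := abs_add_le (c m + ∑' i : ℕ, c (i + (m + 1))) (-(∑' i : ℕ, c (i + (m + 1))))
          simp at this
          linarith [this]
  have h2 : (1:ℝ) / 3 ^ (n+1) ≤ 2 / 3 ^ (m+1) - 1 / 3 ^ (m+1) := by
    have : (1:ℝ) / 3 ^ (n+1) ≤ 1 / 3 ^ (m+1) := by
      apply div_le_div_of_nonneg_left (by norm_num) (by positivity)
      exact pow_le_pow_right₀ (by norm_num) (by omega)
    have h3 : (2:ℝ) / 3 ^ (m+1) - 1 / 3 ^ (m+1) = 1 / 3 ^ (m+1) := by ring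
    linarith
  have h3 : (2:ℝ) / 3 ^ (m+1) - 1 / 3 ^ (m+1) = 1 / 3 ^ (m+1) := by ring
  linarith
open scoped Classical in
noncomputable def pickQ (x : ℝ) (δ : ℝ) (F : Finset Q01) : Q01 :=
  if h : x ∈ Set.Icc (0:ℝ) 1 ∧ 0 < δ then Classical.choose (exists_q01_near x h.1 h.2 F)
  else ⟨0, by constructor <;> norm_num⟩

lemma pickQ_spec {x δ : ℝ} (hx : x ∈ Set.Icc (0:ℝ) 1) (hδ : 0 < δ) (F : Finset Q01) :
    pickQ x δ F ∉ F ∧ |qr (pickQ x δ F) - x| < δ := by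
  rw [pickQ, dif_pos ⟨hx, hδ⟩]
  exact Classical.choose_spec (exists_q01_near x hx hδ F)

noncomputable def seqG (ρ : ℕ → ℝ) : ℕ → List Q01
  | 0 => []
  | (k+1) => seqG ρ k ++ [pickQ (ρ k) ((2:ℝ)^k)⁻¹ (seqG ρ k).toFinset]

noncomputable def seqg (ρ : ℕ → ℝ) (k : ℕ) : Q01 :=
  pickQ (ρ k) ((2:ℝ)^k)⁻¹ (seqG ρ k).toFinset

lemma mem_seqG (ρ : ℕ → ℝ) {j k : ℕ} (h : j < k) : seqg ρ j ∈ seqG ρ k := by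
  induction k with
  | zero => omega
  | succ k ih =>
    rw [seqG]
    rcases Nat.lt_succ_iff_lt_or_eq.mp h with h' | rfl
    · exact List.mem_append_left _ (ih h')
    · exact List.mem_append_right _ (List.mem_singleton.mpr rfl)

lemma seqg_not_mem (ρ : ℕ → ℝ) (hρ : ∀ k, ρ k ∈ Set.Icc (0:ℝ) 1) (k : ℕ) :
    seqg ρ k ∉ (seqG ρ k).toFinset :=
  (pickQ_spec (hρ k) (by positivity) _).1

lemma seqg_close (ρ : ℕ → ℝ) (hρ : ∀ k, ρ k ∈ Set.Icc (0:ℝ) 1) (k : ℕ) :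
    |qr (seqg ρ k) - ρ k| < ((2:ℝ)^k)⁻¹ :=
  (pickQ_spec (hρ k) (by positivity) _).2

lemma seqg_injective (ρ : ℕ → ℝ) (hρ : ∀ k, ρ k ∈ Set.Icc (0:ℝ) 1) :
    Function.Injective (seqg ρ) := by
  intro a b hab
  by_contra hne
  wlog hlt : a < b generalizing a b
  · exact this hab.symm (Ne.symm hne) (by omega)
  exact seqg_not_mem ρ hρ b (by rw [← hab] at *; exact List.mem_toFinset.mpr (mem_seqG ρ hlt))
lemma forward_dir {J : Set (Set Q01)} (hJ : IsIdeal J) (h : KatLE convIdeal J) :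
    ∃ X : ℕ → Set Q01, (∀ n, (X n).Infinite) ∧
      ∀ A ∉ J, ∃ n, (A ∩ X n).Infinite ∧ (A \ X n).Infinite := by
  classical
  obtain ⟨hdown, hunion, hfin, hproper⟩ := hJ
  obtain ⟨f, hf⟩ := h
  set C : ℚ → Set Q01 := fun t => {q : Q01 | qr q < (t:ℝ)} with hC
  set d : ℕ → ℚ := fun n => (Denumerable.eqv ℚ).symm n with hd
  refine ⟨fun n => if (f ⁻¹' C (d n)).Infinite then f ⁻¹' C (d n) else Set.univ, ?_, ?_⟩
  · intro n
    simp only []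
    split_ifs with h'
    · exact h'
    · exact Set.infinite_univ
  · intro A hA
    have hB : f '' A ∉ convIdeal := by
      intro hB
      exact hA (hdown _ (hf _ hB) A (Set.subset_preimage_image f A))
    obtain ⟨x, y, hne, hx, hy⟩ := two_acc_of_not_convIdeal hB
    have key : ∀ x y : ℝ, x < y → AccOf (f '' A) x → AccOf (f '' A) y →
        ∃ n, (A ∩ (if (f ⁻¹' C (d n)).Infinite then f ⁻¹' C (d n) else Set.univ)).Infinite ∧
          (A \ (if (f ⁻¹' C (d n)).Infinite then f ⁻¹' C (d n) else Set.univ)).Infinite := by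
      clear hne hx hy x y
      intro x y hlt hx hy
      obtain ⟨t, hxt, hty⟩ := exists_rat_btwn hlt
      set n := (Denumerable.eqv ℚ) t with hn
      have hdn : d n = t := by simp [hd, hn]
      have hBC : ((f '' A) ∩ C t).Infinite := by
        apply ((hx ((t:ℝ) - x) (by linarith)).mono)
        rintro b ⟨hbB, hb⟩
        refine ⟨hbB, ?_⟩
        have := (abs_lt.mp hb).2
        simp only [hC, Set.mem_setOf_eq]
        linarith
      have hBnC : ((f '' A) \ C t).Infinite := by
        apply ((hy (y - (t:ℝ)) (by linarith)).mono)
        rintro b ⟨hbB, hb⟩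
        refine ⟨hbB, ?_⟩
        have := (abs_lt.mp hb).1
        simp only [hC, Set.mem_setOf_eq, not_lt]
        linarith
      have hAC : (A ∩ f ⁻¹' C t).Infinite := by
        apply Set.Infinite.of_image f
        apply hBC.mono
        rintro b ⟨⟨a, ha, rfl⟩, hbC⟩
        exact ⟨a, ⟨ha, hbC⟩, rfl⟩
      have hAnC : (A \ f ⁻¹' C t).Infinite := by
        apply Set.Infinite.of_image f
        apply hBnC.mono
        rintro b ⟨⟨a, ha, rfl⟩, hbC⟩
        exact ⟨a, ⟨ha, hbC⟩, rfl⟩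
      have hP : (f ⁻¹' C t).Infinite := hAC.mono Set.inter_subset_right
      refine ⟨n, ?_, ?_⟩
      · rw [hdn, if_pos hP]; exact hAC
      · rw [hdn, if_pos hP]; exact hAnC
    rcases hne.lt_or_gt with hlt | hlt
    · exact key x y hlt hx hy
    · exact key y x hlt hy hx
lemma backward_dir {J : Set (Set Q01)} (hJ : IsIdeal J) (X : ℕ → Set Q01)
    (hsplit : ∀ A ∉ J, ∃ n, (A ∩ X n).Infinite ∧ (A \ X n).Infinite) :
    KatLE convIdeal J := by
  classical
  obtain ⟨hdown, hunion, hfin, hproper⟩ := hJ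
  haveI : Denumerable Q01 := (nonempty_denumerable Q01).some
  set E := Denumerable.eqv Q01 with hE
  set ρ : ℕ → ℝ := fun k => rX X (E.symm k) with hρdef
  have hρ : ∀ k, ρ k ∈ Set.Icc (0:ℝ) 1 := fun k => rX_mem_Icc X _
  set f : Q01 → Q01 := fun q => seqg ρ (E q) with hfdef
  have hfinj : Function.Injective f := (seqg_injective ρ hρ).comp E.injective
  have hclose : ∀ q : Q01, |qr (f q) - rX X q| < ((2:ℝ)^(E q))⁻¹ := by
    intro q
    have := seqg_close ρ hρ (E q)
    simpa [hρdef] using this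
  have key : ∀ (S : Set Q01) (x : ℝ), ConvTo S x → f ⁻¹' S ∈ J := by
    intro S x hS
    by_contra hA
    obtain ⟨n, h1, h2⟩ := hsplit _ hA
    set ε : ℝ := 1 / (4 * 3 ^ (n+1)) with hεdef
    have hε : 0 < ε := by positivity
    have hBad1 : {q : Q01 | f q ∈ S ∧ ε ≤ |qr (f q) - x|}.Finite := by
      have : {q : Q01 | f q ∈ S ∧ ε ≤ |qr (f q) - x|} = f ⁻¹' {s ∈ S | ε ≤ |qr s - x|} := rfl
      rw [this]
      exact Set.Finite.preimage (hfinj.injOn) (hS ε hε)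
    have hBad2 : {q : Q01 | ε ≤ ((2:ℝ)^(E q))⁻¹}.Finite := by
      obtain ⟨K, hK⟩ := exists_pow_lt_of_lt_one hε (show (1:ℝ)/2 < 1 by norm_num)
      apply Set.Finite.subset (Set.Finite.preimage (E.injective.injOn) (Set.finite_Iio K))
      intro q hq
      simp only [Set.mem_preimage, Set.mem_Iio]
      by_contra hle
      push_neg at hle
      have : ((2:ℝ)^(E q))⁻¹ ≤ ((1:ℝ)/2)^K := by
        rw [one_div, inv_pow]
        apply inv_anti₀ (by positivity)
        exact pow_le_pow_right₀ (by norm_num) hle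
      exact absurd (le_trans hq this) (not_le.mpr hK)
    set Bad := {q : Q01 | f q ∈ S ∧ ε ≤ |qr (f q) - x|} ∪ {q : Q01 | ε ≤ ((2:ℝ)^(E q))⁻¹} with hBad
    have hBadFin : Bad.Finite := hBad1.union hBad2
    obtain ⟨q, hq⟩ := (h1.diff hBadFin).nonempty
    obtain ⟨p, hp⟩ := (h2.diff hBadFin).nonempty
    obtain ⟨⟨hqA, hqX⟩, hqB⟩ := hq
    obtain ⟨⟨hpA, hpX⟩, hpB⟩ := hp
    have est : ∀ r : Q01, r ∈ f ⁻¹' S → r ∉ Bad → |rX X r - x| < 2 * ε := by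
      intro r hrA hrB
      simp only [hBad, Set.mem_union, Set.mem_setOf_eq, not_or, not_and, not_le] at hrB
      have e1 : |qr (f r) - x| < ε := hrB.1 hrA
      have e2 : ((2:ℝ)^(E r))⁻¹ < ε := hrB.2
      have e3 : |qr (f r) - rX X r| < ε := lt_trans (hclose r) e2
      calc |rX X r - x| ≤ |rX X r - qr (f r)| + |qr (f r) - x| := abs_sub_le _ _ _
        _ < ε + ε := by rw [abs_sub_comm]; exact add_lt_add e3 e1
        _ = 2 * ε := by ring
    have hqe := est q hqA hqB
    have hpe := est p hpA hpB
    have hsep := rX_sep hqX hpX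
    have : |rX X q - rX X p| ≤ |rX X q - x| + |x - rX X p| := abs_sub_le _ _ _
    rw [abs_sub_comm x _] at this
    have h4 : (1:ℝ) / 3 ^ (n+1) = 4 * ε := by rw [hεdef]; field_simp
    linarith
  refine ⟨f, ?_⟩
  intro A hA
  obtain ⟨F, hF, hsub⟩ := hA
  apply hdown _ ?_ _ (Set.preimage_mono hsub)
  clear hsub
  induction F using Finset.induction with
  | empty => simpa using hfin ∅ Set.finite_empty
  | @insert S F _ ih =>
    rw [Finset.coe_insert, Set.sUnion_insert, Set.preimage_union]
    apply hunion
    · obtain ⟨x, _, hconv⟩ := hF S (Finset.mem_insert_self S F)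
      exact key S x hconv
    · exact ih (fun T hT => hF T (Finset.mem_insert_of_mem hT))

theorem conv_katLE_iff_splitting (J : Set (Set Q01)) (hJ : IsIdeal J) :
    KatLE convIdeal J ↔
      ∃ X : ℕ → Set Q01, (∀ n, (X n).Infinite) ∧
        ∀ A ∉ J, ∃ n, (A ∩ X n).Infinite ∧ (A \ X n).Infinite := by
  constructor
  · exact forward_dir hJ
  · rintro ⟨X, _, hsplit⟩
    exact backward_dir hJ X hsplit
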